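/- Boundedness of the approximated covariance: under the recursive inequality Pᵢ,ₖ⁻¹ ⪰ Γᵢ, where Γᵢ := ∑_{τ=2}^{k̄} β̌^{τ−1} ∑_{j∉𝔑} cᵢⱼ⁽τ⁾ F^{(1−τ)ᵀ} Hⱼᵀ Rⱼ⁻¹ Hⱼ F^{1−τ}, if the coefficients cᵢⱼ⁽τ⁾ are strictly positive for all τ ≥ τ̄, all j in a set ℛ whose collective observation matrices give (F, col{Hⱼ}_{j∈ℛ}) observable, and k̄ ≥ τ̄ + n, then Γᵢ ≻ 0, and hence Pᵢ,ₖ ⪯ Γᵢ⁻¹ for all k ≥ k̄: the approximated error covariance is uniformly bounded above. -/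

import Mathlib

open Matrix

private lemma psd_zero' {n : ℕ} : (0 : Matrix (Fin n) (Fin n) ℝ).PosSemidef :=
  ⟨isHermitian_zero, fun x => by simp⟩

private lemma psd_smul' {n : ℕ} {A : Matrix (Fin n) (Fin n) ℝ} (hA : A.PosSemidef) {r : ℝ}
    (hr : 0 ≤ r) : (r • A).PosSemidef := by
  have hAT : Aᵀ = A := by
    rw [← conjTranspose_eq_transpose_of_trivial]; exact hA.1.eq
  refine PosSemidef.of_dotProduct_mulVec_nonneg (by simp [Matrix.IsHermitian, hAT]) fun x => ?_
  rw [smul_mulVec, dotProduct_smul, smul_eq_mul]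
  exact mul_nonneg hr (hA.dotProduct_mulVec_nonneg x)

private lemma psd_sum' {n : ℕ} {ι : Type*} (s : Finset ι) (f : ι → Matrix (Fin n) (Fin n) ℝ)
    (h : ∀ i ∈ s, (f i).PosSemidef) : (∑ i ∈ s, f i).PosSemidef := by
  classical
  induction s using Finset.induction with
  | empty => simpa using psd_zero'
  | insert _ _ hx ih =>
    rw [Finset.sum_insert hx]
    exact ((h _ (Finset.mem_insert_self _ _)).add (ih fun i hi => h i (Finset.mem_insert_of_mem hi)))

private lemma quad_conj {n m : ℕ} (M : Matrix (Fin n) (Fin n) ℝ) (Hh : Matrix (Fin m) (Fin n) ℝ)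
    (S : Matrix (Fin m) (Fin m) ℝ) (x : Fin n → ℝ) :
    x ⬝ᵥ ((Mᵀ * (Hhᵀ * S * Hh) * M) *ᵥ x) =
      (Hh *ᵥ (M *ᵥ x)) ⬝ᵥ (S *ᵥ (Hh *ᵥ (M *ᵥ x))) := by
  have hprod : Mᵀ * (Hhᵀ * S * Hh) * M = (Hh * M)ᵀ * (S * (Hh * M)) := by
    rw [transpose_mul]; simp only [Matrix.mul_assoc]
  simp only [mulVec_mulVec]
  rw [hprod, dotProduct_mulVec, dotProduct_mulVec, ← vecMul_vecMul, vecMul_transpose]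

private lemma psd_conj' {n m : ℕ} (M : Matrix (Fin n) (Fin n) ℝ)
    (Hh : Matrix (Fin m) (Fin n) ℝ) {S : Matrix (Fin m) (Fin m) ℝ} (hS : S.PosSemidef) :
    (Mᵀ * (Hhᵀ * S * Hh) * M).PosSemidef := by
  have := (hS.conjTranspose_mul_mul_same Hh).conjTranspose_mul_mul_same M
  simpa [conjTranspose_eq_transpose_of_trivial] using this

private lemma quad_sum' {n : ℕ} {ι : Type*} (s : Finset ι) (f : ι → Matrix (Fin n) (Fin n) ℝ)
    (x : Fin n → ℝ) :
    x ⬝ᵥ ((∑ i ∈ s, f i) *ᵥ x) = ∑ i ∈ s, x ⬝ᵥ ((f i) *ᵥ x) := by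
  classical
  induction s using Finset.induction with
  | empty => simp
  | insert _ _ h ih => rw [Finset.sum_insert h, Finset.sum_insert h, add_mulVec, dotProduct_add, ih]

private lemma quad_smul' {n : ℕ} (A : Matrix (Fin n) (Fin n) ℝ) (r : ℝ) (x : Fin n → ℝ) :
    x ⬝ᵥ ((r • A) *ᵥ x) = r * (x ⬝ᵥ (A *ᵥ x)) := by
  rw [smul_mulVec, dotProduct_smul, smul_eq_mul]

private lemma inv_loewner {n : ℕ} {A B : Matrix (Fin n) (Fin n) ℝ} (hA : A.PosDef) (hB : B.PosDef)
    (h : (B⁻¹ - A).PosSemidef) : (A⁻¹ - B).PosSemidef := by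
  have hAd : IsUnit A.det := isUnit_iff_ne_zero.mpr hA.det_pos.ne'
  have hBd : IsUnit B.det := isUnit_iff_ne_zero.mpr hB.det_pos.ne'
  refine PosSemidef.of_dotProduct_mulVec_nonneg ((hA.1.inv).sub hB.1) fun x => ?_
  simp only [star_trivial, sub_mulVec, dotProduct_sub]
  set y := B *ᵥ x with hy
  have hyx : B⁻¹ *ᵥ y = x := by rw [hy, mulVec_mulVec, nonsing_inv_mul _ hBd, one_mulVec]
  have h1 : y ⬝ᵥ (A *ᵥ y) ≤ y ⬝ᵥ (B⁻¹ *ᵥ y) := by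
    have := h.dotProduct_mulVec_nonneg y
    simp only [star_trivial, sub_mulVec, dotProduct_sub] at this
    linarith
  have hB1 : y ⬝ᵥ (B⁻¹ *ᵥ y) = x ⬝ᵥ (B *ᵥ x) := by
    rw [hyx, dotProduct_comm]
  set z := y - A⁻¹ *ᵥ x with hz
  have h2 : 0 ≤ z ⬝ᵥ (A *ᵥ z) := by simpa using hA.posSemidef.dotProduct_mulVec_nonneg z
  have hAAi : A *ᵥ (A⁻¹ *ᵥ x) = x := by
    rw [mulVec_mulVec, mul_nonsing_inv _ hAd, one_mulVec]
  have expand : z ⬝ᵥ (A *ᵥ z) =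
      y ⬝ᵥ (A *ᵥ y) - y ⬝ᵥ x - x ⬝ᵥ y + x ⬝ᵥ (A⁻¹ *ᵥ x) := by
    rw [hz, mulVec_sub, sub_dotProduct, dotProduct_sub, dotProduct_sub, hAAi]
    have hAT : Aᵀ = A := by
      rw [← conjTranspose_eq_transpose_of_trivial]; exact hA.1.eq
    have e1 : (A⁻¹ *ᵥ x) ⬝ᵥ (A *ᵥ y) = x ⬝ᵥ y := by
      rw [dotProduct_mulVec, ← mulVec_transpose, hAT, hAAi]
    have e2 : (A⁻¹ *ᵥ x) ⬝ᵥ x = x ⬝ᵥ (A⁻¹ *ᵥ x) := dotProduct_comm _ _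
    rw [e1, e2]
    ring
  have hxy : x ⬝ᵥ y = y ⬝ᵥ x := dotProduct_comm _ _
  linarith [h1, h2, expand ▸ h2]

theorem stmt_16 {n N : ℕ} (m : Fin N → ℕ)
    (F : Matrix (Fin n) (Fin n) ℝ) (hF : IsUnit F.det)
    (H : ∀ j : Fin N, Matrix (Fin (m j)) (Fin n) ℝ)
    (R : ∀ j : Fin N, Matrix (Fin (m j)) (Fin (m j)) ℝ)
    (naive : Finset (Fin N)) (Rset : Finset (Fin N))
    (hRnaive : ∀ j ∈ Rset, j ∉ naive)
    (hRpd : ∀ j ∉ naive, (R j).PosDef)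
    (β : ℝ) (hβ0 : 0 < β) (hβ1 : β ≤ 1)
    (τbar kbar : ℕ) (hkbar : τbar + n ≤ kbar) (hτbar : 2 ≤ τbar)
    (c : ℕ → Fin N → ℝ)
    (hcnonneg : ∀ τ j, 0 ≤ c τ j)
    (hcpos : ∀ τ j, τbar ≤ τ → j ∈ Rset → 0 < c τ j)
    -- observability of (F, col{Hⱼ}_{j ∈ ℛ})
    (hobs : ∀ x : Fin n → ℝ,
      (∀ τ < n, ∀ j ∈ Rset, H j *ᵥ (F ^ τ *ᵥ x) = 0) → x = 0)
    (Γ : Matrix (Fin n) (Fin n) ℝ)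
    (hΓ : Γ = ∑ τ ∈ Finset.Icc 2 kbar, β ^ (τ - 1) •
        ∑ j ∈ naiveᶜ, c τ j •
          (((F⁻¹) ^ (τ - 1))ᵀ * ((H j)ᵀ * (R j)⁻¹ * H j) * (F⁻¹) ^ (τ - 1)))
    (P : ℕ → Matrix (Fin n) (Fin n) ℝ)
    (hPpd : ∀ k, (P k).PosDef)
    (hPbound : ∀ k ≥ kbar, ((P k)⁻¹ - Γ).PosSemidef) :
    Γ.PosDef ∧ ∀ k ≥ kbar, (Γ⁻¹ - P k).PosSemidef := by
  classical
  -- cancellation lemmas for powers of F and F⁻¹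
  have hcancel : ∀ a : ℕ, F ^ a * (F⁻¹) ^ a = 1 := by
    intro a
    induction a with
    | zero => simp
    | succ a ih =>
      rw [pow_succ, pow_succ']
      calc F ^ a * F * (F⁻¹ * F⁻¹ ^ a) = F ^ a * (F * F⁻¹) * F⁻¹ ^ a := by
            simp only [Matrix.mul_assoc]
        _ = F ^ a * F⁻¹ ^ a := by rw [mul_nonsing_inv _ hF, Matrix.mul_one]
        _ = 1 := ih
  have hcancel' : ∀ s a : ℕ, s ≤ a → F ^ s * (F⁻¹) ^ a = (F⁻¹) ^ (a - s) := by
    intro s a hsa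
    have : (F⁻¹) ^ a = (F⁻¹) ^ s * (F⁻¹) ^ (a - s) := by
      rw [← pow_add, Nat.add_sub_cancel' hsa]
    rw [this, ← Matrix.mul_assoc, hcancel, Matrix.one_mul]
  -- Γ is positive semidefinite
  have hΓpsd : Γ.PosSemidef := by
    rw [hΓ]
    refine psd_sum' _ _ fun τ _ => psd_smul' (psd_sum' _ _ fun j hj => ?_)
      (pow_nonneg hβ0.le _)
    exact psd_smul' (psd_conj' _ _ ((hRpd j (Finset.mem_compl.mp hj)).inv).posSemidef)
      (hcnonneg τ j)
  -- quadratic form formula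
  have hquad : ∀ x : Fin n → ℝ, x ⬝ᵥ (Γ *ᵥ x) =
      ∑ τ ∈ Finset.Icc 2 kbar, β ^ (τ - 1) *
        ∑ j ∈ naiveᶜ, c τ j *
          ((H j *ᵥ ((F⁻¹) ^ (τ - 1) *ᵥ x)) ⬝ᵥ ((R j)⁻¹ *ᵥ (H j *ᵥ ((F⁻¹) ^ (τ - 1) *ᵥ x)))) := by
    intro x
    rw [hΓ, quad_sum']
    refine Finset.sum_congr rfl fun τ _ => ?_
    rw [quad_smul', quad_sum']
    congr 1
    refine Finset.sum_congr rfl fun j _ => ?_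
    rw [quad_smul', quad_conj]
  have hΓpd : Γ.PosDef := by
    refine PosDef.of_dotProduct_mulVec_pos hΓpsd.1 fun x hx => ?_
    have star_eq : star x = x := by simp
    rw [star_eq, hquad]
    -- nonnegativity of each summand
    have hnn : ∀ τ ∈ Finset.Icc 2 kbar, 0 ≤ β ^ (τ - 1) *
        ∑ j ∈ naiveᶜ, c τ j *
          ((H j *ᵥ ((F⁻¹) ^ (τ - 1) *ᵥ x)) ⬝ᵥ ((R j)⁻¹ *ᵥ (H j *ᵥ ((F⁻¹) ^ (τ - 1) *ᵥ x)))) := by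
      intro τ _
      refine mul_nonneg (pow_nonneg hβ0.le _) (Finset.sum_nonneg fun j hj => ?_)
      refine mul_nonneg (hcnonneg τ j) ?_
      have := ((hRpd j (Finset.mem_compl.mp hj)).inv).posSemidef.dotProduct_mulVec_nonneg
        (H j *ᵥ ((F⁻¹) ^ (τ - 1) *ᵥ x))
      simpa using this
    -- find a strictly positive summand using observability
    set a := τbar + n - 2 with ha
    have hx' : (F⁻¹) ^ a *ᵥ x ≠ 0 := by
      intro h0
      apply hx
      have : (F ^ a * (F⁻¹) ^ a) *ᵥ x = F ^ a *ᵥ ((F⁻¹) ^ a *ᵥ x) := by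
        rw [mulVec_mulVec]
      rw [hcancel a, one_mulVec, h0, mulVec_zero] at this
      exact this
    have hexist : ∃ s < n, ∃ j ∈ Rset, H j *ᵥ (F ^ s *ᵥ ((F⁻¹) ^ a *ᵥ x)) ≠ 0 := by
      by_contra hcon
      push_neg at hcon
      exact hx' (hobs _ hcon)
    obtain ⟨s, hs, j, hjR, hne⟩ := hexist
    have hn1 : 1 ≤ n := Nat.one_le_iff_ne_zero.mpr (by rintro rfl; omega)
    set τ₀ := τbar + n - 1 - s with hτ₀
    have hτ₀mem : τ₀ ∈ Finset.Icc 2 kbar := by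
      rw [Finset.mem_Icc]; omega
    have hvec : (F⁻¹) ^ (τ₀ - 1) *ᵥ x = F ^ s *ᵥ ((F⁻¹) ^ a *ᵥ x) := by
      rw [mulVec_mulVec, hcancel' s a (by omega), show a - s = τ₀ - 1 by omega]
    refine Finset.sum_pos' hnn ⟨τ₀, hτ₀mem, ?_⟩
    refine mul_pos (pow_pos hβ0 _) ?_
    have hjn : j ∉ naive := hRnaive j hjR
    refine Finset.sum_pos' (fun i hi => ?_) ⟨j, Finset.mem_compl.mpr hjn, ?_⟩
    · refine mul_nonneg (hcnonneg τ₀ i) ?_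
      have := ((hRpd i (Finset.mem_compl.mp hi)).inv).posSemidef.dotProduct_mulVec_nonneg
        (H i *ᵥ ((F⁻¹) ^ (τ₀ - 1) *ᵥ x))
      simpa using this
    · refine mul_pos (hcpos τ₀ j (by omega) hjR) ?_
      have hy : H j *ᵥ ((F⁻¹) ^ (τ₀ - 1) *ᵥ x) ≠ 0 := by rw [hvec]; exact hne
      have := ((hRpd j hjn).inv).dotProduct_mulVec_pos hy
      simpa using this
  exact ⟨hΓpd, fun k hk => inv_loewner hΓpd (hPpd k) (hPbound k hk)⟩
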